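/- (Simulation / performance-difference lemma.) For any two transition kernels p, p̃ and any (s,a) ∈ S × A: Q^π_p(s,a) − Q^π_{p̃}(s,a) = (γ/(1−γ)) · Σ_{(s',a') ∈ S×A} d^π_{p,s,a}(s',a') · Σ_{s''∈S} V^π_{p̃}(s'') · (p(s''|s',a') − p̃(s''|s',a')). -/

import Mathlib

open Finset

noncomputable section

/-- `p` is a transition kernel: `p(·|s,a)` is a probability vector on `S`. -/
def IsKernel {S A : Type*} [Fintype S] (p : S → A → S → ℝ) : Prop :=
  (∀ s a s', 0 ≤ p s a s') ∧ ∀ s a, ∑ s' : S, p s a s' = 1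

/-- `π` is a policy: `π(·|s)` is a probability vector on `A`. -/
def IsPolicy {S A : Type*} [Fintype A] (π : S → A → ℝ) : Prop :=
  (∀ s a, 0 ≤ π s a) ∧ ∀ s, ∑ a : A, π s a = 1

/-- The row-stochastic matrix `P_{p,π}(s,s') = Σ_a π(a|s) p(s'|s,a)`. -/
def Pmat {S A : Type*} [Fintype A] (π : S → A → ℝ) (p : S → A → S → ℝ) :
    Matrix S S ℝ :=
  fun s s' => ∑ a : A, π s a * p s a s'

/-- `r^π(s) = Σ_a π(a|s) r(s,a)`. -/
def rpi {S A : Type*} [Fintype A] (π : S → A → ℝ) (r : S → A → ℝ) (s : S) : ℝ :=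
  ∑ a : A, π s a * r s a

/-- The value function `V^π_p(s) = Σ_t γ^t ((P_{p,π})^t r^π)(s)`. -/
def Vval {S A : Type*} [Fintype S] [DecidableEq S] [Fintype A]
    (γ : ℝ) (π : S → A → ℝ) (r : S → A → ℝ) (p : S → A → S → ℝ) (s : S) : ℝ :=
  ∑' t : ℕ, γ ^ t * ((Pmat π p ^ t).mulVec (fun s' => rpi π r s')) s

/-- The Q-function `Q^π_p(s,a) = r(s,a) + γ Σ_{s'} p(s'|s,a) V^π_p(s')`. -/
def Qval {S A : Type*} [Fintype S] [DecidableEq S] [Fintype A]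
    (γ : ℝ) (π : S → A → ℝ) (r : S → A → ℝ) (p : S → A → S → ℝ) (s : S) (a : A) : ℝ :=
  r s a + γ * ∑ s' : S, p s a s' * Vval γ π r p s'

/-- The matrix `M_{p,π}((s,a),(s',a')) = p(s'|s,a) π(a'|s')` on `S × A`. -/
def Mmat {S A : Type*} (π : S → A → ℝ) (p : S → A → S → ℝ) :
    Matrix (S × A) (S × A) ℝ :=
  fun sa s'a' => p sa.1 sa.2 s'a'.1 * π s'a'.1 s'a'.2

/-- The discounted visitation distribution
`d^π_{p,s,a}(s',a') = (1−γ) Σ_t γ^t ((M_{p,π})^t)_{(s,a),(s',a')}`. -/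
def dvis {S A : Type*} [Fintype S] [DecidableEq S] [Fintype A] [DecidableEq A]
    (γ : ℝ) (π : S → A → ℝ) (p : S → A → S → ℝ) (x y : S × A) : ℝ :=
  (1 - γ) * ∑' t : ℕ, γ ^ t * (Mmat π p ^ t) x y

/-- `d^π_{p,ρ}(s,a) = Σ_{(s₀,a₀)} ρ_{s₀} π(a₀|s₀) d^π_{p,s₀,a₀}(s,a)`. -/
def drho {S A : Type*} [Fintype S] [DecidableEq S] [Fintype A] [DecidableEq A]
    (γ : ℝ) (π : S → A → ℝ) (p : S → A → S → ℝ) (ρ : S → ℝ) (y : S × A) : ℝ :=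
  ∑ x : S × A, ρ x.1 * π x.1 x.2 * dvis γ π p x y

/-- `KL_{sa}(p,q) = Σ_{s'} p(s'|s,a) log(p(s'|s,a)/q(s'|s,a))`
(with the convention `0 log 0 = 0`, automatic since `Real.log 0 = 0`). -/
def KLsa {S A : Type*} [Fintype S] (p q : S → A → S → ℝ) (s : S) (a : A) : ℝ :=
  ∑ s' : S, p s a s' * Real.log (p s a s' / q s a s')

end

section aux

variable {I : Type*} [Fintype I]

def RLStoch (M : Matrix I I ℝ) : Prop := (∀ i j, 0 ≤ M i j) ∧ ∀ i, ∑ j, M i j = 1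

lemma RLStoch.pow [DecidableEq I] {M : Matrix I I ℝ} (h : RLStoch M) (t : ℕ) :
    RLStoch (M ^ t) := by
  induction t with
  | zero =>
    rw [pow_zero]
    refine ⟨fun i j => ?_, fun i => ?_⟩
    · rw [Matrix.one_apply]; split <;> norm_num
    · simp [Matrix.one_apply]
  | succ n ih =>
    rw [pow_succ]
    refine ⟨fun i j => ?_, fun i => ?_⟩
    · rw [Matrix.mul_apply]
      exact Finset.sum_nonneg fun k _ => mul_nonneg (ih.1 i k) (h.1 k j)
    · simp only [Matrix.mul_apply]
      rw [Finset.sum_comm]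
      simp [← Finset.mul_sum, h.2, ih.2]

lemma RLStoch.entry_le_one {M : Matrix I I ℝ} (h : RLStoch M) (i j : I) : M i j ≤ 1 := by
  calc M i j ≤ ∑ k, M i k :=
        Finset.single_le_sum (fun k _ => h.1 i k) (Finset.mem_univ j)
    _ = 1 := h.2 i

lemma RLStoch.mulVec_abs_le {M : Matrix I I ℝ} (h : RLStoch M) (v : I → ℝ) (C : ℝ)
    (hv : ∀ j, |v j| ≤ C) (i : I) : |M.mulVec v i| ≤ C := by
  have h1 : |∑ j, M i j * v j| ≤ ∑ j, M i j * C := by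
    refine (Finset.abs_sum_le_sum_abs _ _).trans (Finset.sum_le_sum fun j _ => ?_)
    rw [abs_mul, abs_of_nonneg (h.1 i j)]
    exact mul_le_mul_of_nonneg_left (hv j) (h.1 i j)
  simpa [Matrix.mulVec, dotProduct, ← Finset.sum_mul, h.2 i] using h1

lemma abs_le_sum_abs (v : I → ℝ) (j : I) : |v j| ≤ ∑ k, |v k| :=
  Finset.single_le_sum (fun k _ => abs_nonneg (v k)) (Finset.mem_univ j)

lemma summable_geom_mul {γ : ℝ} (hγ0 : 0 ≤ γ) (hγ1 : γ < 1) {f : ℕ → ℝ} {C : ℝ}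
    (hf : ∀ t, |f t| ≤ C) : Summable (fun t => γ ^ t * f t) := by
  refine Summable.of_norm_bounded (g := fun t => C * γ ^ t)
    ((summable_geometric_of_lt_one hγ0 hγ1).mul_left C) (fun t => ?_)
  rw [Real.norm_eq_abs, abs_mul, abs_of_nonneg (pow_nonneg hγ0 t), mul_comm]
  exact mul_le_mul_of_nonneg_right (hf t) (pow_nonneg hγ0 t)

lemma summable_pow_mulVec [DecidableEq I] {γ : ℝ} (hγ0 : 0 ≤ γ) (hγ1 : γ < 1)
    {M : Matrix I I ℝ} (h : RLStoch M) (v : I → ℝ) (i : I) :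
    Summable (fun t => γ ^ t * ((M ^ t).mulVec v) i) :=
  summable_geom_mul hγ0 hγ1 (C := ∑ k, |v k|)
    (fun t => (h.pow t).mulVec_abs_le v _ (abs_le_sum_abs v) i)

lemma summable_pow_entry [DecidableEq I] {γ : ℝ} (hγ0 : 0 ≤ γ) (hγ1 : γ < 1)
    {M : Matrix I I ℝ} (h : RLStoch M) (i j : I) :
    Summable (fun t => γ ^ t * (M ^ t) i j) :=
  summable_geom_mul hγ0 hγ1 (C := 1) (fun t => by
    rw [abs_of_nonneg ((h.pow t).1 i j)]; exact (h.pow t).entry_le_one i j)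

end aux

section mdp

variable {S A : Type*} [Fintype S] [DecidableEq S] [Fintype A] [DecidableEq A]
  {γ : ℝ} {r : S → A → ℝ} {π : S → A → ℝ} {p : S → A → S → ℝ}

lemma stoch_Pmat (hπ : IsPolicy π) (hp : IsKernel p) : RLStoch (Pmat π p) := by
  refine ⟨fun s s' => Finset.sum_nonneg fun a _ => mul_nonneg (hπ.1 s a) (hp.1 s a s'),
    fun s => ?_⟩
  simp only [Pmat]
  rw [Finset.sum_comm]
  simp [← Finset.mul_sum, hp.2, hπ.2]

lemma stoch_Mmat (hπ : IsPolicy π) (hp : IsKernel p) : RLStoch (Mmat π p) := by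
  refine ⟨fun x y => mul_nonneg (hp.1 _ _ _) (hπ.1 _ _), fun x => ?_⟩
  rw [Fintype.sum_prod_type]
  simp [Mmat, ← Finset.mul_sum, hπ.2, hp.2]

lemma vval_summable (hγ : γ ∈ Set.Ioo (0:ℝ) 1) (hπ : IsPolicy π) (hp : IsKernel p) (s : S) :
    Summable (fun t => γ ^ t * ((Pmat π p ^ t).mulVec (fun s' => rpi π r s')) s) :=
  summable_pow_mulVec hγ.1.le hγ.2 (stoch_Pmat hπ hp) _ s

lemma vval_bellman (hγ : γ ∈ Set.Ioo (0:ℝ) 1) (hπ : IsPolicy π) (hp : IsKernel p) (s : S) :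
    Vval γ π r p s = rpi π r s + γ * (Pmat π p).mulVec (Vval γ π r p) s := by
  set P := Pmat π p with hP
  have hs := stoch_Pmat (p := p) hπ hp
  rw [Vval, Summable.tsum_eq_zero_add (vval_summable hγ hπ hp s)]
  congr 1
  · simp [Matrix.one_mulVec, rpi]
  · have step : ∀ t : ℕ, γ ^ (t+1) * ((P ^ (t+1)).mulVec (fun s' => rpi π r s')) s
        = γ * ∑ s', P s s' * (γ ^ t * ((P ^ t).mulVec (fun s' => rpi π r s')) s') := by
      intro t
      rw [pow_succ' P t, ← Matrix.mulVec_mulVec]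
      simp only [Matrix.mulVec, dotProduct]
      rw [Finset.mul_sum, Finset.mul_sum]
      congr 1; funext s'
      ring
    calc (∑' t : ℕ, γ ^ (t+1) * ((P ^ (t+1)).mulVec (fun s' => rpi π r s')) s)
        = ∑' t : ℕ, γ * ∑ s', P s s' * (γ ^ t * ((P ^ t).mulVec (fun s' => rpi π r s')) s') := by
          exact tsum_congr step
      _ = γ * ∑' t : ℕ, ∑ s', P s s' * (γ ^ t * ((P ^ t).mulVec (fun s' => rpi π r s')) s') := by
          rw [tsum_mul_left]
      _ = γ * ∑ s', ∑' t : ℕ, P s s' * (γ ^ t * ((P ^ t).mulVec (fun s' => rpi π r s')) s') := by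
          rw [Summable.tsum_finsetSum (fun s' _ => ((vval_summable hγ hπ hp s').mul_left (P s s')))]
      _ = γ * (Pmat π p).mulVec (Vval γ π r p) s := by
          simp only [Matrix.mulVec, dotProduct, Vval, ← hP]
          congr 1
          exact Finset.sum_congr rfl fun s' _ => tsum_mul_left

lemma vval_eq_sum_q (hγ : γ ∈ Set.Ioo (0:ℝ) 1) (hπ : IsPolicy π) (hp : IsKernel p) (s : S) :
    ∑ a, π s a * Qval γ π r p s a = Vval γ π r p s := by
  rw [vval_bellman hγ hπ hp s]
  simp only [Qval, mul_add, Finset.sum_add_distrib]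
  congr 1
  · simp only [Matrix.mulVec, dotProduct, Pmat, Finset.sum_mul, Finset.mul_sum]
    rw [Finset.sum_comm]
    exact Finset.sum_congr rfl fun a _ => Finset.sum_congr rfl fun s' _ => by ring

end mdp

open Filter

theorem stmt7 {S A : Type*} [Fintype S] [DecidableEq S] [Fintype A] [DecidableEq A]
    (γ : ℝ) (hγ : γ ∈ Set.Ioo (0 : ℝ) 1) (r : S → A → ℝ)
    (π : S → A → ℝ) (hπ : IsPolicy π)
    (p ptil : S → A → S → ℝ) (hp : IsKernel p) (hptil : IsKernel ptil) :
    ∀ s a, Qval γ π r p s a - Qval γ π r ptil s a =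
      γ / (1 - γ) * ∑ x : S × A, dvis γ π p (s, a) x *
        ∑ s'' : S, Vval γ π r ptil s'' * (p x.1 x.2 s'' - ptil x.1 x.2 s'') := by
  intro s a
  obtain ⟨hγ0, hγ1⟩ := hγ
  have h1γ : (1 : ℝ) - γ ≠ 0 := (by linarith : (0:ℝ) < 1 - γ).ne'
  set M := Mmat π p with hM
  have hMs : RLStoch M := stoch_Mmat hπ hp
  set g : S × A → ℝ :=
    fun x => ∑ s'' : S, Vval γ π r ptil s'' * (p x.1 x.2 s'' - ptil x.1 x.2 s'') with hg
  set D : S × A → ℝ := fun x => Qval γ π r p x.1 x.2 - Qval γ π r ptil x.1 x.2 with hD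
  -- fixed point equation
  have hfix : ∀ x : S × A, D x = γ * g x + γ * M.mulVec D x := by
    rintro ⟨s', a'⟩
    have hMD : M.mulVec D (s', a')
        = ∑ s'' : S, p s' a' s'' * (Vval γ π r p s'' - Vval γ π r ptil s'') := by
      simp only [Matrix.mulVec, dotProduct]
      rw [Fintype.sum_prod_type]
      refine Finset.sum_congr rfl fun s'' _ => ?_
      rw [← vval_eq_sum_q ⟨hγ0, hγ1⟩ hπ hp s'', ← vval_eq_sum_q ⟨hγ0, hγ1⟩ hπ hptil s'',
        ← Finset.sum_sub_distrib, Finset.mul_sum]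
      refine Finset.sum_congr rfl fun a'' _ => ?_
      simp only [hM, Mmat, hD]
      ring
    rw [hMD]
    have key : (∑ s'', p s' a' s'' * Vval γ π r p s'')
          - (∑ s'', ptil s' a' s'' * Vval γ π r ptil s'')
        = (∑ s'', Vval γ π r ptil s'' * (p s' a' s'' - ptil s' a' s''))
          + ∑ s'', p s' a' s'' * (Vval γ π r p s'' - Vval γ π r ptil s'') := by
      rw [← Finset.sum_sub_distrib, ← Finset.sum_add_distrib]
      exact Finset.sum_congr rfl fun s'' _ => by ring
    simp only [hD, hg, Qval]
    linear_combination γ * key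
  -- iterated expansion
  have hiter : ∀ (x : S × A) (n : ℕ),
      D x = (∑ t ∈ Finset.range n, γ ^ (t+1) * (M ^ t).mulVec g x)
        + γ ^ n * (M ^ n).mulVec D x := by
    intro x n
    induction n with
    | zero => simp [Matrix.one_mulVec]
    | succ n ih =>
      have hstep : (M ^ n).mulVec D x
          = γ * ((M ^ n).mulVec g x) + γ * ((M ^ (n+1)).mulVec D x) := by
        calc (M ^ n).mulVec D x
            = ∑ y, (M ^ n) x y * (γ * g y + γ * M.mulVec D y) :=
              Finset.sum_congr rfl fun y _ => by rw [hfix y]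
          _ = γ * (∑ y, (M ^ n) x y * g y) + γ * (∑ y, (M ^ n) x y * M.mulVec D y) := by
              rw [Finset.mul_sum, Finset.mul_sum, ← Finset.sum_add_distrib]
              exact Finset.sum_congr rfl fun y _ => by ring
          _ = γ * ((M ^ n).mulVec g x) + γ * ((M ^ (n+1)).mulVec D x) := by
              rw [pow_succ, ← Matrix.mulVec_mulVec]
              rfl
      rw [ih, hstep, Finset.sum_range_succ]
      ring
  -- vanishing remainder
  have hlim : Tendsto (fun n => γ ^ n * (M ^ n).mulVec D (s, a)) atTop (nhds 0) := by
    have hb : ∀ n, ‖γ ^ n * (M ^ n).mulVec D (s, a)‖ ≤ (∑ y, |D y|) * γ ^ n := fun n => by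
      rw [Real.norm_eq_abs, abs_mul, abs_of_nonneg (pow_nonneg hγ0.le n), mul_comm]
      exact mul_le_mul_of_nonneg_right
        ((hMs.pow n).mulVec_abs_le D _ (abs_le_sum_abs D) (s, a)) (pow_nonneg hγ0.le n)
    have h2 : Tendsto (fun n : ℕ => (∑ y, |D y|) * γ ^ n) atTop (nhds ((∑ y, |D y|) * 0)) :=
      (tendsto_pow_atTop_nhds_zero_of_lt_one hγ0.le hγ1).const_mul _
    rw [mul_zero] at h2
    exact squeeze_zero_norm hb h2
  -- tsum formula for D
  have hsumm : Summable (fun t => γ ^ (t+1) * (M ^ t).mulVec g (s, a)) :=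
    ((summable_pow_mulVec hγ0.le hγ1 hMs g (s, a)).mul_left γ).congr fun t => by ring
  have hDsum : D (s, a) = ∑' t : ℕ, γ ^ (t+1) * (M ^ t).mulVec g (s, a) := by
    have h1 : Tendsto (fun n => ∑ t ∈ Finset.range n, γ ^ (t+1) * (M ^ t).mulVec g (s, a))
        atTop (nhds (∑' t, γ ^ (t+1) * (M ^ t).mulVec g (s, a))) :=
      hsumm.hasSum.tendsto_sum_nat
    have h2 : Tendsto (fun n => ∑ t ∈ Finset.range n, γ ^ (t+1) * (M ^ t).mulVec g (s, a))
        atTop (nhds (D (s, a))) := by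
      have h3 := (tendsto_const_nhds (x := D (s, a)) (f := atTop)).sub hlim
      rw [sub_zero] at h3
      refine h3.congr fun n => ?_
      rw [hiter (s, a) n]; ring
    exact tendsto_nhds_unique h2 h1
  -- rewrite the RHS sum
  have hrhs : ∑ x : S × A, dvis γ π p (s, a) x * g x
      = (1 - γ) * ∑' t : ℕ, γ ^ t * (M ^ t).mulVec g (s, a) := by
    simp only [dvis, ← hM]
    calc ∑ x : S × A, ((1 - γ) * ∑' t : ℕ, γ ^ t * (M ^ t) (s, a) x) * g x
        = (1 - γ) * ∑ x : S × A, ∑' t : ℕ, γ ^ t * (M ^ t) (s, a) x * g x := by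
          rw [Finset.mul_sum]
          refine Finset.sum_congr rfl fun x _ => ?_
          rw [mul_assoc, ← tsum_mul_right]
      _ = (1 - γ) * ∑' t : ℕ, ∑ x : S × A, γ ^ t * (M ^ t) (s, a) x * g x := by
          rw [← Summable.tsum_finsetSum (fun x _ =>
            ((summable_pow_entry hγ0.le hγ1 hMs (s, a) x).mul_right (g x)))]
      _ = (1 - γ) * ∑' t : ℕ, γ ^ t * (M ^ t).mulVec g (s, a) := by
          refine congrArg _ (tsum_congr fun t => ?_)
          simp only [Matrix.mulVec, dotProduct, Finset.mul_sum]
          exact Finset.sum_congr rfl fun x _ => by ring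
  calc Qval γ π r p s a - Qval γ π r ptil s a = D (s, a) := rfl
    _ = ∑' t : ℕ, γ ^ (t+1) * (M ^ t).mulVec g (s, a) := hDsum
    _ = γ * ∑' t : ℕ, γ ^ t * (M ^ t).mulVec g (s, a) := by
        rw [← tsum_mul_left]; exact tsum_congr fun t => by ring
    _ = γ / (1 - γ) * ((1 - γ) * ∑' t : ℕ, γ ^ t * (M ^ t).mulVec g (s, a)) := by
        rw [← mul_assoc, div_mul_cancel₀ _ h1γ]
    _ = γ / (1 - γ) * ∑ x : S × A, dvis γ π p (s, a) x *
          ∑ s'' : S, Vval γ π r ptil s'' * (p x.1 x.2 s'' - ptil x.1 x.2 s'') := by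
        rw [← hrhs]
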